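/- Let a: ℤ → ℝ_{>0} satisfy the T_1 equation of motion at every index n. If there exists k ∈ ℤ with a_k = a_{k+1}, then a is constant: a_n = a_k for all n ∈ ℤ. -/

import Mathlib

/-- The `T₁` equation of motion at index `n` for the bi-infinite sequence of edge
lengths `a : ℤ → ℝ`. -/
def T1EoM (a : ℤ → ℝ) (n : ℤ) : Prop :=
  (a n)⁻¹ * (((a (n - 1))⁻¹ + (a n)⁻¹) ^ 2 / (((a (n - 1))⁻¹) ^ 2 + ((a n)⁻¹) ^ 2) ^ 2
      + ((a n)⁻¹ + (a (n + 1))⁻¹) ^ 2 / (((a n)⁻¹) ^ 2 + ((a (n + 1))⁻¹) ^ 2) ^ 2)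
    - ((a (n - 1))⁻¹ + (a n)⁻¹) / (((a (n - 1))⁻¹) ^ 2 + ((a n)⁻¹) ^ 2)
    - ((a n)⁻¹ + (a (n + 1))⁻¹) / (((a n)⁻¹) ^ 2 + ((a (n + 1))⁻¹) ^ 2) = 0

lemma t1_key (x y z : ℝ) (hx : 0 < x) (hy : 0 < y) (hz : 0 < z)
    (h : y * ((x + y) ^ 2 / (x ^ 2 + y ^ 2) ^ 2 + (y + z) ^ 2 / (y ^ 2 + z ^ 2) ^ 2)
      - (x + y) / (x ^ 2 + y ^ 2) - (y + z) / (y ^ 2 + z ^ 2) = 0)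
    (hxy : x = y) : z = y := by
  subst hxy
  have hd : (0:ℝ) < x ^ 2 + z ^ 2 := by positivity
  have h1 : (x + x) ^ 2 / (x ^ 2 + x ^ 2) ^ 2 = 1 / x ^ 2 := by
    field_simp
  have h2 : (x + x) / (x ^ 2 + x ^ 2) = 1 / x := by
    field_simp
  rw [h1, h2, mul_add] at h
  have h0 : x * (1 / x ^ 2) = 1 / x := by field_simp
  have h3 : x * ((x + z) ^ 2 / (x ^ 2 + z ^ 2) ^ 2) = (x + z) / (x ^ 2 + z ^ 2) := by
    linarith [h, h0]
  have h4 : x * (x + z) ^ 2 * (x ^ 2 + z ^ 2) = (x + z) * (x ^ 2 + z ^ 2) ^ 2 := by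
    field_simp at h3
    linear_combination (x + z) * (x ^ 2 + z ^ 2) * h3
  have h5 : x * (x + z) = x ^ 2 + z ^ 2 := by
    nlinarith [h4, mul_pos (by positivity : (0:ℝ) < x + z) hd]
  nlinarith [h5]

lemma t1_key' (x y z : ℝ) (hx : 0 < x) (hy : 0 < y) (hz : 0 < z)
    (h : y * ((x + y) ^ 2 / (x ^ 2 + y ^ 2) ^ 2 + (y + z) ^ 2 / (y ^ 2 + z ^ 2) ^ 2)
      - (x + y) / (x ^ 2 + y ^ 2) - (y + z) / (y ^ 2 + z ^ 2) = 0)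
    (hzy : z = y) : x = y := by
  apply t1_key z y x hz hy hx _ hzy
  linear_combination h

theorem t1_constant_of_two_equal (a : ℤ → ℝ) (hpos : ∀ n, 0 < a n)
    (heom : ∀ n, T1EoM a n) (k : ℤ) (hk : a k = a (k + 1)) :
    ∀ n, a n = a k := by
  have hinv : ∀ n, 0 < (a n)⁻¹ := fun n => inv_pos.mpr (hpos n)
  -- forward step: if a (m-1) = a m then a (m+1) = a m
  have fwd : ∀ m : ℤ, a (m - 1) = a m → a (m + 1) = a m := by
    intro m hm
    have h := heom m
    unfold T1EoM at h
    have := t1_key ((a (m - 1))⁻¹) ((a m)⁻¹) ((a (m + 1))⁻¹)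
      (hinv _) (hinv _) (hinv _) h (by rw [hm])
    have := inv_injective this
    simpa using this
  have bwd : ∀ m : ℤ, a (m + 1) = a m → a (m - 1) = a m := by
    intro m hm
    have h := heom m
    unfold T1EoM at h
    have := t1_key' ((a (m - 1))⁻¹) ((a m)⁻¹) ((a (m + 1))⁻¹)
      (hinv _) (hinv _) (hinv _) h (by rw [hm])
    have := inv_injective this
    simpa using this
  have main : ∀ n : ℤ, a (k + n) = a k ∧ a (k + n + 1) = a k := by
    intro n
    induction n using Int.induction_on with
    | zero => exact ⟨by norm_num, by rw [add_zero]; exact hk.symm⟩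
    | succ i ih =>
        obtain ⟨h1, h2⟩ := ih
        refine ⟨by rw [show k + (i + 1) = k + i + 1 by ring]; exact h2, ?_⟩
        have := fwd (k + i + 1) (by rw [show k + i + 1 - 1 = k + i by ring, h1, h2])
        rw [show k + (i + 1) + 1 = k + i + 1 + 1 by ring, this, h2]
    | pred i ih =>
        obtain ⟨h1, h2⟩ := ih
        refine ⟨?_, by rw [show k + (-(i:ℤ) - 1) + 1 = k + -(i:ℤ) by ring]; exact h1⟩
        have := bwd (k + -i) (by rw [h1, h2])
        rw [show k + (-(i:ℤ) - 1) = k + -(i:ℤ) - 1 by ring, this, h1]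
  intro n
  have := (main (n - k)).1
  rwa [show k + (n - k) = n by ring] at this
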